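/- Let (c_n)_{n≥1} be a sequence of complex numbers with Σ_{k=1}^∞ k·|c_k| < ∞, and define b_n = Σ_{k=1}^∞ c_{k·n} for each n ≥ 1. Then for every n ≥ 1 the series Σ_{k=1}^∞ μ(k)·b_{k·n} converges and c_n = Σ_{k=1}^∞ μ(k)·b_{k·n}. -/

import Mathlib

open Filter ArithmeticFunction

/-- **Möbius inversion for series (Theorem 1).**
If `(cₙ)` is a sequence of complex numbers with `∑ k·|cₖ| < ∞`, and
`bₙ = ∑_{k=1}^∞ c_{k·n}`, then for every `n ≥ 1` the series
`∑_{k=1}^∞ μ(k)·b_{k·n}` converges and equals `cₙ`. -/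
theorem moebius_inversion_of_summable_smul
    (c b : ℕ → ℂ)
    (hc : Summable fun k : ℕ => (k : ℝ) * ‖c k‖)
    (hb : ∀ n : ℕ, 1 ≤ n → HasSum (fun k : ℕ => c ((k + 1) * n)) (b n)) :
    ∀ n : ℕ, 1 ≤ n →
      Tendsto (fun N : ℕ => ∑ k ∈ Finset.Icc 1 N, (moebius k : ℂ) * b (k * n))
        atTop (nhds (c n)) := by
  intro n hn
  set A : ℕ → ℕ → ℤ := fun N m => ∑ k ∈ (Finset.Icc 1 N).filter (· ∣ m), moebius k with hA
  -- divisor set identification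
  have hfil : ∀ N m : ℕ, 1 ≤ m → m ≤ N → (Finset.Icc 1 N).filter (· ∣ m) = m.divisors := by
    intro N m h1 h2
    ext k
    simp only [Finset.mem_filter, Finset.mem_Icc, Nat.mem_divisors]
    constructor
    · rintro ⟨⟨hk1, hk2⟩, hd⟩; exact ⟨hd, by omega⟩
    · rintro ⟨hd, hm⟩
      have hk0 : k ≠ 0 := by rintro rfl; rw [Nat.zero_dvd] at hd; omega
      have := Nat.le_of_dvd (by omega) hd
      exact ⟨⟨by omega, by omega⟩, hd⟩
  have hAone : ∀ N : ℕ, 1 ≤ N → A N 1 = 1 := by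
    intro N hN
    rw [hA]
    simp only [hfil N 1 le_rfl hN, Nat.divisors_one, Finset.sum_singleton, moebius_apply_one]
  have hAmid : ∀ N m : ℕ, 2 ≤ m → m ≤ N → A N m = 0 := by
    intro N m h2 hmN
    rw [hA]
    simp only [hfil N m (by omega) hmN]
    have := congrArg (fun f => f m) moebius_mul_coe_zeta
    simpa only [coe_mul_zeta_apply, one_apply, if_neg (by omega : m ≠ 1)] using this
  have hAbound : ∀ N m : ℕ, 1 ≤ m → |A N m| ≤ (m : ℤ) := by
    intro N m h1
    calc |A N m| ≤ ∑ k ∈ (Finset.Icc 1 N).filter (· ∣ m), |moebius k| :=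
          Finset.abs_sum_le_sum_abs _ _
      _ ≤ ∑ k ∈ (Finset.Icc 1 N).filter (· ∣ m), 1 :=
          Finset.sum_le_sum fun k _ => abs_moebius_le_one
      _ = ((Finset.Icc 1 N).filter (· ∣ m)).card := by simp
      _ ≤ (Finset.Icc 1 m).card := by
          refine Nat.cast_le.mpr (Finset.card_le_card ?_)
          intro k hk
          simp only [Finset.mem_filter, Finset.mem_Icc] at hk ⊢
          exact ⟨hk.1.1, Nat.le_of_dvd (by omega) hk.2⟩
      _ = (m : ℤ) := by simp
  -- key HasSum for the partial sums
  have key : ∀ N : ℕ, HasSum (fun m : ℕ => ((A N (m + 1) : ℤ) : ℂ) * c ((m + 1) * n))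
      (∑ k ∈ Finset.Icc 1 N, (moebius k : ℂ) * b (k * n)) := by
    intro N
    have h1 : ∀ k ∈ Finset.Icc 1 N,
        HasSum (fun m : ℕ => if k ∣ (m + 1) then (moebius k : ℂ) * c ((m + 1) * n) else 0)
          ((moebius k : ℂ) * b (k * n)) := by
      intro k hk
      obtain ⟨hk1, hk2⟩ := Finset.mem_Icc.mp hk
      have hkn : 1 ≤ k * n := Nat.one_le_iff_ne_zero.mpr (by positivity)
      have h0 : HasSum (fun j : ℕ => (moebius k : ℂ) * c ((j + 1) * (k * n)))
          ((moebius k : ℂ) * b (k * n)) := (hb (k * n) hkn).mul_left _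
      have hinj : Function.Injective (fun j : ℕ => (j + 1) * k - 1) := by
        intro a c hac
        simp only at hac
        have ha : (a + 1) * k ≥ 1 := Nat.one_le_iff_ne_zero.mpr (by positivity)
        have hc' : (c + 1) * k ≥ 1 := Nat.one_le_iff_ne_zero.mpr (by positivity)
        have : (a + 1) * k = (c + 1) * k := by omega
        have := Nat.eq_of_mul_eq_mul_right (by omega : 0 < k) this
        omega
      refine (Function.Injective.hasSum_iff hinj ?_).mp ?_
      · intro m hm
        rw [if_neg]
        intro hdvd
        obtain ⟨j, hj⟩ := hdvd
        have hj1 : 1 ≤ j := by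
          rcases Nat.eq_zero_or_pos j with rfl | h
          · simp at hj
          · exact h
        refine hm ⟨j - 1, ?_⟩
        simp only []
        rw [Nat.sub_add_cancel hj1, mul_comm j k, ← hj]
        omega
      · apply h0.congr_fun
        intro j
        simp only [Function.comp_apply]
        have h1 : (j + 1) * k ≥ 1 := Nat.one_le_iff_ne_zero.mpr (by positivity)
        have harg : ((j + 1) * k - 1 + 1) * n = (j + 1) * (k * n) := by
          rw [Nat.sub_add_cancel h1, mul_assoc]
        rw [if_pos ⟨j + 1, by rw [mul_comm k (j + 1)]; omega⟩, harg]
    have h2 := hasSum_sum h1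
    apply h2.congr_fun
    intro m
    rw [hA]
    push_cast
    rw [Finset.sum_mul, Finset.sum_filter]
  -- summable majorant
  have hg : Summable (fun m : ℕ => (((m + 1) * n : ℕ) : ℝ) * ‖c ((m + 1) * n)‖) := by
    apply hc.comp_injective (i := fun m : ℕ => (m + 1) * n)
    intro a b hab
    simp only at hab
    exact by
      have := Nat.eq_of_mul_eq_mul_right (by omega : 0 < n) hab
      omega
  -- the difference bound
  have hdiff : ∀ N : ℕ, 1 ≤ N →
      ‖(∑ k ∈ Finset.Icc 1 N, (moebius k : ℂ) * b (k * n)) - c n‖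
        ≤ ∑' m : ℕ, (((m + N + 1) * n : ℕ) : ℝ) * ‖c ((m + N + 1) * n)‖ := by
    intro N hN
    set v : ℕ → ℂ := fun m => ((A N (m + 1) : ℤ) : ℂ) * c ((m + 1) * n) with hv
    have hsum := key N
    have hvs : Summable v := hsum.summable
    have hsplit := Summable.sum_add_tsum_nat_add N hvs
    have hfirst : ∑ i ∈ Finset.range N, v i = c n := by
      rw [Finset.sum_eq_single 0]
      · simp only [hv, zero_add, hAone N hN, one_mul, Int.cast_one]
      · intro i hi hi0
        simp only [hv]
        rw [hAmid N (i + 1) (by omega) (by simp at hi; omega)]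
        simp
      · intro h; simp at h; omega
    rw [hsum.tsum_eq] at hsplit
    have heq : (∑ k ∈ Finset.Icc 1 N, (moebius k : ℂ) * b (k * n)) - c n
        = ∑' m : ℕ, v (m + N) := by
      rw [← hsplit, hfirst]; ring
    rw [heq]
    have hterm : ∀ m : ℕ, ‖v (m + N)‖
        ≤ (((m + N + 1) * n : ℕ) : ℝ) * ‖c ((m + N + 1) * n)‖ := by
      intro m
      simp only [hv]
      rw [norm_mul, Complex.norm_intCast]
      have hb2 : |((A N (m + N + 1) : ℤ) : ℝ)| ≤ ((m + N + 1 : ℕ) : ℝ) := by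
        rw [← Int.cast_abs]
        exact_mod_cast hAbound N (m + N + 1) (by omega)
      calc |((A N (m + N + 1) : ℤ) : ℝ)| * ‖c ((m + N + 1) * n)‖
          ≤ ((m + N + 1 : ℕ) : ℝ) * ‖c ((m + N + 1) * n)‖ :=
            mul_le_mul_of_nonneg_right hb2 (norm_nonneg _)
        _ ≤ (((m + N + 1) * n : ℕ) : ℝ) * ‖c ((m + N + 1) * n)‖ := by
            apply mul_le_mul_of_nonneg_right _ (norm_nonneg _)
            push_cast
            have hn' : (1 : ℝ) ≤ (n : ℝ) := by exact_mod_cast hn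
            have h0 : (0 : ℝ) ≤ (m : ℝ) + N + 1 := by positivity
            nlinarith
    have hgN : Summable (fun m : ℕ => (((m + N + 1) * n : ℕ) : ℝ)
        * ‖c ((m + N + 1) * n)‖) := by
      have := hg.comp_injective (add_left_injective N)
      exact this.congr fun m => rfl
    calc ‖∑' m : ℕ, v (m + N)‖ ≤ ∑' m : ℕ, ‖v (m + N)‖ := by
          simpa using norm_tsum_le_tsum_norm (f := fun m => v (m + N))
            (by
              apply hgN.of_norm_bounded _
              intro m
              simpa using hterm m)
      _ ≤ ∑' m : ℕ, (((m + N + 1) * n : ℕ) : ℝ) * ‖c ((m + N + 1) * n)‖ := by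
          apply Summable.tsum_le_tsum hterm _ hgN
          apply hgN.of_norm_bounded _
          intro m
          simpa using hterm m
  -- tail tendsto 0
  have htail : Tendsto (fun N : ℕ =>
      ∑' m : ℕ, (((m + N + 1) * n : ℕ) : ℝ) * ‖c ((m + N + 1) * n)‖) atTop (nhds 0) := by
    have := tendsto_sum_nat_add (fun m : ℕ => (((m + 1) * n : ℕ) : ℝ) * ‖c ((m + 1) * n)‖)
    apply this.congr
    intro N
    rfl
  -- finish: squeeze
  rw [tendsto_iff_norm_sub_tendsto_zero]
  apply squeeze_zero_norm' _ htail
  filter_upwards [eventually_ge_atTop 1] with N hN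
  simpa using hdiff N hN
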